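/- Let A be a 2×2 integer matrix with A² = −3I, k an integer with |k| > 1, and v a vector with {v, Av} linearly independent. Suppose (k_i), (l_i) are sequences with k_i Av + l_i v ∈ {0, ±v, ±(kAv − v), ±kAv} for all i, i.e. (k_i, l_i) ∈ {(0,0), (0,±1), (±k, ∓1), (±k, 0)}. If ∑_{i=1}^{∞} A^{−i}(k_i Av + l_i v) = L v + K Av with L, K ∈ ℝ, then |K| ≤ (1 + |k|)/2 < |k|. -/

import Mathlib

open Matrix

/-- `A` has integer entries. -/
def IsIntMat (A : Matrix (Fin 2) (Fin 2) ℝ) : Prop :=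
  ∀ i j, ∃ m : ℤ, A i j = (m : ℝ)

theorem stmt5 (A : Matrix (Fin 2) (Fin 2) ℝ) (hint : IsIntMat A)
    (h : A * A + (3 : ℝ) • (1 : Matrix (Fin 2) (Fin 2) ℝ) = 0)
    (k : ℤ) (hk : 1 < |k|)
    (v : Fin 2 → ℝ) (hv : LinearIndependent ℝ ![v, A *ᵥ v])
    (ks ls : ℕ → ℤ)
    (hd : ∀ i, (ks i, ls i) ∈
      ({(0, 0), (0, 1), (0, -1), (k, -1), (-k, 1), (k, 0), (-k, 0)} : Set (ℤ × ℤ)))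
    (L K : ℝ)
    (hsum : HasSum
      (fun i : ℕ => A⁻¹ ^ (i + 1) *ᵥ ((ks i : ℝ) • (A *ᵥ v) + (ls i : ℝ) • v))
      (L • v + K • (A *ᵥ v))) :
    |K| ≤ (1 + |(k : ℝ)|) / 2 ∧ (1 + |(k : ℝ)|) / 2 < |(k : ℝ)| := by
  have hkR : (1 : ℝ) < |(k : ℝ)| := by
    have := hk; rw [← Int.cast_abs]; exact_mod_cast this
  have hA2 : A * A = (-3 : ℝ) • 1 := by
    have h' : A * A = -((3:ℝ) • (1 : Matrix (Fin 2) (Fin 2) ℝ)) := by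
      rw [eq_neg_iff_add_eq_zero]; exact h
    rw [h']; module
  have hAB : A * ((-1/3 : ℝ) • A) = 1 := by
    rw [Matrix.mul_smul, hA2, smul_smul]; norm_num
  have hinv : A⁻¹ = (-1/3 : ℝ) • A := Matrix.inv_eq_right_inv hAB
  have hinv2 : A⁻¹ ^ 2 = (-1/3 : ℝ) • 1 := by
    rw [hinv, sq, Matrix.smul_mul, Matrix.mul_smul, hA2, smul_smul, smul_smul]
    norm_num
  -- powers
  have hpow_even : ∀ m : ℕ, A⁻¹ ^ (2 * m) = ((-1/3 : ℝ)) ^ m • (1 : Matrix (Fin 2) (Fin 2) ℝ) := by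
    intro m
    induction m with
    | zero => simp
    | succ m ih =>
        have : 2 * (m + 1) = 2 * m + 2 := by ring
        rw [this, pow_add, ih, hinv2, Matrix.smul_mul, Matrix.mul_smul, smul_smul, pow_succ]
        simp [mul_comm]
  have hpow_odd : ∀ m : ℕ, A⁻¹ ^ (2 * m + 1) = ((-1/3 : ℝ)) ^ m • A⁻¹ := by
    intro m
    rw [pow_add, hpow_even, pow_one, Matrix.smul_mul, Matrix.one_mul]
  -- action of A⁻¹ on the basis combination
  have hAinvw : ∀ a b : ℝ, A⁻¹ *ᵥ (a • (A *ᵥ v) + b • v)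
      = a • v + (-1/3 * b) • (A *ᵥ v) := by
    intro a b
    rw [hinv, Matrix.smul_mulVec, Matrix.mulVec_add, Matrix.mulVec_smul,
      Matrix.mulVec_smul, Matrix.mulVec_mulVec, hA2, Matrix.smul_mulVec,
      Matrix.one_mulVec]
    match_scalars <;> ring
  -- the coefficient sequences
  set e : ℕ → ℝ := fun i =>
    (-1/3 : ℝ) ^ (i / 2 + 1) * (if Even i then (ls i : ℝ) else (ks i : ℝ)) with he_def
  set c : ℕ → ℝ := fun i =>
    if Even i then (-1/3 : ℝ) ^ (i / 2) * (ks i : ℝ)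
    else (-1/3 : ℝ) ^ (i / 2 + 1) * (ls i : ℝ) with hc_def
  have hterm : ∀ i : ℕ,
      A⁻¹ ^ (i + 1) *ᵥ ((ks i : ℝ) • (A *ᵥ v) + (ls i : ℝ) • v)
        = c i • v + e i • (A *ᵥ v) := by
    intro i
    obtain ⟨j, hj | hj⟩ := Nat.even_or_odd' i
    · have hdiv : i / 2 = j := by omega
      have heven : Even i := ⟨j, by omega⟩
      rw [show i + 1 = 2 * j + 1 by omega, hpow_odd, Matrix.smul_mulVec, hAinvw,
        he_def, hc_def]
      simp only [heven, if_pos, hdiv]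
      match_scalars <;> ring
    · have hdiv : i / 2 = j := by omega
      have hodd : ¬ Even i := by
        simp [hj, parity_simps]
      rw [show i + 1 = 2 * (j + 1) by omega, hpow_even, Matrix.smul_mulVec,
        Matrix.one_mulVec, he_def, hc_def]
      simp only [if_neg hodd, hdiv]
      match_scalars <;> ring
  -- basis and coordinate functional
  have hfin : Fintype.card (Fin 2) = Module.finrank ℝ (Fin 2 → ℝ) := by simp
  set b := basisOfLinearIndependentOfCardEqFinrank hv hfin with hb_def
  have hb : ⇑b = ![v, A *ᵥ v] := coe_basisOfLinearIndependentOfCardEqFinrank hv hfin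
  have hb0 : b 0 = v := by rw [hb]; rfl
  have hb1 : b 1 = A *ᵥ v := by rw [hb]; rfl
  set φ : (Fin 2 → ℝ) →L[ℝ] ℝ := LinearMap.toContinuousLinearMap (b.coord 1) with hφ_def
  have hφv : φ v = 0 := by
    rw [hφ_def, ← hb0]
    simp [Module.Basis.coord_apply, Finsupp.single_apply]
  have hφAv : φ (A *ᵥ v) = 1 := by
    rw [hφ_def, ← hb1]
    simp [Module.Basis.coord_apply]
  have he : HasSum e K := by
    have h1 := hsum.mapL φ
    have h2 : ∀ i, φ (A⁻¹ ^ (i + 1) *ᵥ ((ks i : ℝ) • (A *ᵥ v) + (ls i : ℝ) • v)) = e i := by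
      intro i
      rw [hterm i, map_add, φ.map_smul, φ.map_smul, hφv, hφAv]
      simp
    have h3 : φ (L • v + K • (A *ᵥ v)) = K := by
      rw [map_add, φ.map_smul, φ.map_smul, hφv, hφAv]
      simp
    rw [h3] at h1
    simpa only [h2] using h1
  -- digit bounds
  have hbound : ∀ i, |(ls i : ℝ)| ≤ 1 ∧ |(ks i : ℝ)| ≤ |(k : ℝ)| := by
    intro i
    have hd' := hd i
    simp only [Set.mem_insert_iff, Set.mem_singleton_iff, Prod.mk.injEq] at hd'
    rcases hd' with ⟨h1, h2⟩ | ⟨h1, h2⟩ | ⟨h1, h2⟩ | ⟨h1, h2⟩ | ⟨h1, h2⟩ | ⟨h1, h2⟩ | ⟨h1, h2⟩ <;>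
      rw [h1, h2] <;> constructor <;> push_cast <;>
      simp [abs_neg] <;> linarith [abs_nonneg (k : ℝ), hkR]
  set g : ℕ → ℝ := fun i =>
    (1/3 : ℝ) ^ (i / 2 + 1) * (if Even i then 1 else |(k : ℝ)|) with hg_def
  have habs : ∀ i, |e i| ≤ g i := by
    intro i
    rw [he_def, hg_def]
    simp only [abs_mul, abs_pow]
    have h13 : |(-1/3 : ℝ)| = 1/3 := by norm_num
    rw [h13]
    by_cases hi : Even i <;> simp only [hi, if_true, if_false] <;>
      apply mul_le_mul_of_nonneg_left _ (by positivity)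
    · exact (hbound i).1
    · exact (hbound i).2
  have hgeo : HasSum (fun n : ℕ => (1/3 : ℝ) ^ (n + 1)) (1/2) := by
    have h2 := (hasSum_geometric_of_lt_one (by norm_num : (0:ℝ) ≤ 1/3) (by norm_num)).mul_left
      (1/3 : ℝ)
    have heq : (fun n : ℕ => (1/3 : ℝ) * (1/3) ^ n) = fun n : ℕ => (1/3 : ℝ) ^ (n + 1) := by
      funext n; ring
    rw [heq] at h2
    convert h2 using 1 <;> first | rfl | norm_num
  have hg : HasSum g ((1 + |(k : ℝ)|) / 2) := by
    have heven : HasSum (fun j : ℕ => g (2 * j)) (1/2) := by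
      have : (fun j : ℕ => g (2 * j)) = fun j : ℕ => (1/3 : ℝ) ^ (j + 1) := by
        funext j
        have : (2 * j) / 2 = j := by omega
        simp [hg_def, this, even_two_mul]
      rw [this]; exact hgeo
    have hodd : HasSum (fun j : ℕ => g (2 * j + 1)) (|(k : ℝ)| / 2) := by
      have heq : (fun j : ℕ => g (2 * j + 1)) = fun j : ℕ => (1/3 : ℝ) ^ (j + 1) * |(k : ℝ)| := by
        funext j
        have h1 : (2 * j + 1) / 2 = j := by omega
        have h2 : ¬ Even (2 * j + 1) := by simp [parity_simps]
        simp [hg_def, h1, h2]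
      rw [heq]
      have := hgeo.mul_right |(k : ℝ)|
      convert this using 1 <;> first | rfl | ring
    have := HasSum.even_add_odd heven hodd
    convert this using 1 <;> first | rfl | ring
  have hsabs : Summable (fun i => |e i|) :=
    Summable.of_nonneg_of_le (fun i => abs_nonneg _) habs hg.summable
  have hKle : |K| ≤ (1 + |(k : ℝ)|) / 2 := by
    have h1 : |K| ≤ ∑' i, |e i| := by
      rw [← he.tsum_eq]
      simpa [Real.norm_eq_abs] using norm_tsum_le_tsum_norm (f := e) (by simpa using hsabs)
    have h2 : ∑' i, |e i| ≤ ∑' i, g i := Summable.tsum_le_tsum habs hsabs hg.summable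
    rw [hg.tsum_eq] at h2
    linarith
  exact ⟨hKle, by linarith⟩
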